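/- Let T be a minimum spanning tree of S, and let w_1 ≤ w_2 ≤ ⋯ ≤ w_{n−1} be its edge weights sorted in nondecreasing order. Define the index set I = {m ∈ {1,…,n−1} : Σ_{i=1}^{m−1} w_i < w_m}, let m_1 < m_2 < ⋯ < m_k be the elements of I, and set m_{k+1} = n. Then for every r ∈ {1,…,k−1} and every pair x, y ∈ S, the distance d(x,y) does not lie strictly between Σ_{j=1}^{m_{r+1}−1} w_j and w_{m_{r+1}}; that is, either d(x,y) ≤ Σ_{j=1}^{m_{r+1}−1} w_j or d(x,y) ≥ w_{m_{r+1}}. -/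

import Mathlib

/-- The length of an edge of the complete graph on a finite point set `S` in a
metric space: the distance between its two endpoints. -/
noncomputable def edgeLen {X : Type*} [MetricSpace X] (S : Finset X) : Sym2 ↥S → ℝ :=
  Sym2.lift ⟨fun a b => dist (a : X) (b : X), fun a b => dist_comm (a : X) (b : X)⟩

/-- The total weight of a graph `T` on a finite point set `S` in a metric space:
the sum of the distances between the endpoints of its edges. -/
noncomputable def graphWeight {X : Type*} [MetricSpace X] (S : Finset X)
    (T : SimpleGraph ↥S) : ℝ :=
  ∑ᶠ e ∈ T.edgeSet, edgeLen S e

lemma edgeLen_nonneg {X : Type*} [MetricSpace X] (S : Finset X) (s : Sym2 ↥S) :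
    0 ≤ edgeLen S s := by
  induction s using Sym2.ind with
  | _ a b => simpa [edgeLen] using dist_nonneg

lemma dist_le_walk_sum {X : Type*} [MetricSpace X] (S : Finset X) (G : SimpleGraph ↥S)
    {u v : ↥S} (p : G.Walk u v) :
    dist (u : X) (v : X) ≤ (p.edges.map (edgeLen S)).sum := by
  induction p with
  | nil => simp
  | @cons u a v h q ih =>
    rw [SimpleGraph.Walk.edges_cons, List.map_cons, List.sum_cons]
    have h1 : edgeLen S s(u, a) = dist (u : X) (a : X) := by simp [edgeLen]
    calc dist (u : X) (v : X) ≤ dist (u : X) (a : X) + dist (a : X) (v : X) :=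
        dist_triangle _ _ _
      _ ≤ edgeLen S s(u, a) + (q.edges.map (edgeLen S)).sum := by
        rw [h1]; exact add_le_add le_rfl ih

lemma reachable_trans_of_adj {V : Type*} {G H : SimpleGraph V}
    (h : ∀ u v, G.Adj u v → H.Reachable u v) {u v : V} (hr : G.Reachable u v) :
    H.Reachable u v := by
  obtain ⟨p⟩ := hr
  induction p with
  | nil => exact SimpleGraph.Reachable.refl _
  | cons ha q ih => exact (h _ _ ha).trans ih

/-- Let `S` be a finite set of `n ≥ 2` points in a metric space, `T` a minimum
spanning tree of `S`, and `w 1 ≤ ⋯ ≤ w (n-1)` its edge weights sorted in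
nondecreasing order (enumerated by an injection `e` from `{1,…,n−1}` onto the
edge set of `T`). With `I = {m ∈ {1,…,n−1} : ∑_{i=1}^{m−1} w i < w m}`
enumerated as `m 1 < ⋯ < m k` and `m (k+1) = n`: for every `r ∈ {1,…,k−1}`
and all `x, y ∈ S`, either `d(x,y) ≤ ∑_{j=1}^{m (r+1) − 1} w j` or
`d(x,y) ≥ w (m (r+1))`. -/
theorem stmt_4 {X : Type*} [MetricSpace X] (S : Finset X) (n : ℕ)
    (hn : n = S.card) (hn2 : 2 ≤ n)
    (T : SimpleGraph ↥S) (hT : T.IsTree)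
    (hmin : ∀ T' : SimpleGraph ↥S, T'.IsTree → graphWeight S T ≤ graphWeight S T')
    (w : ℕ → ℝ) (e : ℕ → Sym2 ↥S)
    (hinj : ∀ i, 1 ≤ i → i ≤ n - 1 → ∀ j, 1 ≤ j → j ≤ n - 1 → e i = e j → i = j)
    (hrange : ∀ s, s ∈ T.edgeSet ↔ ∃ i, 1 ≤ i ∧ i ≤ n - 1 ∧ e i = s)
    (hw : ∀ i, 1 ≤ i → i ≤ n - 1 → w i = edgeLen S (e i))
    (hmono : ∀ i j, 1 ≤ i → i ≤ j → j ≤ n - 1 → w i ≤ w j)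
    (k : ℕ) (m : ℕ → ℕ)
    (hI : ∀ x, ((1 ≤ x ∧ x ≤ n - 1) ∧ ∑ i ∈ Finset.Icc 1 (x - 1), w i < w x) ↔
      ∃ i, 1 ≤ i ∧ i ≤ k ∧ m i = x)
    (hsm : StrictMonoOn m (Set.Icc 1 (k + 1)))
    (hmk : m (k + 1) = n) :
    ∀ r, 1 ≤ r → r ≤ k - 1 → ∀ x y : ↥S,
      dist (x : X) (y : X) ≤ ∑ j ∈ Finset.Icc 1 (m (r + 1) - 1), w j ∨
        w (m (r + 1)) ≤ dist (x : X) (y : X) := by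
  classical
  intro r hr1 hr2 x y
  by_contra hcon
  push_neg at hcon
  obtain ⟨hd1, hd2⟩ := hcon
  set M := m (r + 1) with hMdef
  have hMI : (1 ≤ M ∧ M ≤ n - 1) ∧ ∑ i ∈ Finset.Icc 1 (M - 1), w i < w M :=
    (hI M).mpr ⟨r + 1, by omega, by omega, rfl⟩
  obtain ⟨⟨hM1, hM2⟩, hMsum⟩ := hMI
  -- nonnegativity of the weights
  have hwnn : ∀ i ∈ Finset.Icc 1 (n - 1), 0 ≤ w i := by
    intro i hi
    rw [Finset.mem_Icc] at hi
    rw [hw i hi.1 hi.2]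
    exact edgeLen_nonneg S _
  have hwnn' : ∀ i ∈ Finset.Icc 1 (M - 1), 0 ≤ w i := by
    intro i hi
    rw [Finset.mem_Icc] at hi
    exact hwnn i (Finset.mem_Icc.mpr ⟨hi.1, by omega⟩)
  have hsum_nn : 0 ≤ ∑ i ∈ Finset.Icc 1 (M - 1), w i := Finset.sum_nonneg hwnn'
  have hdpos : 0 < dist (x : X) (y : X) := lt_of_le_of_lt hsum_nn hd1
  have hxyX : (x : X) ≠ (y : X) := dist_pos.mp hdpos
  have hxyne : x ≠ y := fun h => hxyX (congrArg _ h)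
  -- index function on edges
  have hex : ∀ s' ∈ T.edgeSet, ∃ i, (1 ≤ i ∧ i ≤ n - 1) ∧ e i = s' := by
    intro s' hs'
    obtain ⟨i, h1, h2, h3⟩ := (hrange s').mp hs'
    exact ⟨i, ⟨h1, h2⟩, h3⟩
  choose! f hf1 hf2 using hex
  -- x and y are not adjacent in T
  have hxyT : s(x, y) ∉ T.edgeSet := by
    intro hmem
    obtain ⟨i, hi1, hi2, hie⟩ := (hrange s(x, y)).mp hmem
    have hwi : w i = dist (x : X) (y : X) := by
      rw [hw i hi1 hi2, hie]; simp [edgeLen]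
    by_cases hiM : i ≤ M - 1
    · have h1 : w i ≤ ∑ j ∈ Finset.Icc 1 (M - 1), w j :=
        Finset.single_le_sum hwnn' (Finset.mem_Icc.mpr ⟨hi1, hiM⟩)
      linarith
    · have h2 : w M ≤ w i := hmono M i hM1 (by omega) hi2
      linarith
  -- the unique path from x to y in T
  obtain ⟨p, hp, hpu⟩ := hT.existsUnique_path x y
  by_cases hcase : ∀ s' ∈ p.edges, f s' ≤ M - 1
  -- Case A : all edges on the path have small index
  · have h1 : dist (x : X) (y : X) ≤ (p.edges.map (edgeLen S)).sum :=
      dist_le_walk_sum S T p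
    have hnodup : p.edges.Nodup := hp.edges_nodup
    have h2 : (p.edges.map (edgeLen S)).sum = ∑ s' ∈ p.edges.toFinset, edgeLen S s' :=
      (List.sum_toFinset _ hnodup).symm
    have h3 : ∑ s' ∈ p.edges.toFinset, edgeLen S s' = ∑ s' ∈ p.edges.toFinset, w (f s') := by
      apply Finset.sum_congr rfl
      intro s' hs'
      have hsT : s' ∈ T.edgeSet := p.edges_subset_edgeSet (List.mem_toFinset.mp hs')
      rw [hw _ (hf1 s' hsT).1 (hf1 s' hsT).2, hf2 s' hsT]
    have h4 : ∑ s' ∈ p.edges.toFinset, w (f s') = ∑ i ∈ p.edges.toFinset.image f, w i := by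
      refine (Finset.sum_image ?_).symm
      intro a ha b hb hab
      have haT := p.edges_subset_edgeSet (List.mem_toFinset.mp ha)
      have hbT := p.edges_subset_edgeSet (List.mem_toFinset.mp hb)
      rw [← hf2 a haT, ← hf2 b hbT, hab]
    have h5 : p.edges.toFinset.image f ⊆ Finset.Icc 1 (M - 1) := by
      intro i hi
      obtain ⟨s', hs', rfl⟩ := Finset.mem_image.mp hi
      have hsT := p.edges_subset_edgeSet (List.mem_toFinset.mp hs')
      exact Finset.mem_Icc.mpr ⟨(hf1 s' hsT).1, hcase s' (List.mem_toFinset.mp hs')⟩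
    have h6 : ∑ i ∈ p.edges.toFinset.image f, w i ≤ ∑ i ∈ Finset.Icc 1 (M - 1), w i :=
      Finset.sum_le_sum_of_subset_of_nonneg h5 (fun i hi _ => hwnn' i hi)
    linarith
  -- Case B : some edge on the path has index ≥ M ; exchange argument
  · push_neg at hcase
    obtain ⟨s₀, hs₀p, hjM⟩ := hcase
    have hs₀T : s₀ ∈ T.edgeSet := p.edges_subset_edgeSet hs₀p
    have hj1 : 1 ≤ f s₀ := (hf1 s₀ hs₀T).1
    have hj2 : f s₀ ≤ n - 1 := (hf1 s₀ hs₀T).2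
    have hje : e (f s₀) = s₀ := hf2 s₀ hs₀T
    have hMj : M ≤ f s₀ := by omega
    have hwj : w M ≤ w (f s₀) := hmono M (f s₀) hM1 hMj hj2
    have hlenj : edgeLen S s₀ = w (f s₀) := by rw [hw _ hj1 hj2, hje]
    have hne : s(x, y) ≠ s₀ := fun h => hxyT (h ▸ hs₀T)
    set G : SimpleGraph ↥S := T ⊔ SimpleGraph.fromEdgeSet {s(x, y)} with hG
    set T' : SimpleGraph ↥S := G \ SimpleGraph.fromEdgeSet {s₀} with hT'def
    have hTleG : T ≤ G := le_sup_left
    have hpG : ∀ e' ∈ p.edges, e' ∈ G.edgeSet := fun e' he' =>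
      SimpleGraph.edgeSet_mono hTleG (p.edges_subset_edgeSet he')
    have hadjG : G.Adj y x := by
      rw [hG, SimpleGraph.sup_adj]
      right
      rw [SimpleGraph.fromEdgeSet_adj]
      exact ⟨by rw [Sym2.eq_swap]; exact Set.mem_singleton _, hxyne.symm⟩
    have hpathG : (p.transfer G hpG).IsPath := hp.transfer hpG
    have hcycle : (SimpleGraph.Walk.cons hadjG (p.transfer G hpG)).IsCycle := by
      refine SimpleGraph.Path.cons_isCycle ⟨p.transfer G hpG, hpathG⟩ hadjG ?_
      rw [SimpleGraph.Walk.edges_transfer]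
      intro hmem
      rw [Sym2.eq_swap] at hmem
      exact hxyT (p.edges_subset_edgeSet hmem)
    obtain ⟨a, b, hab⟩ : ∃ a b, s(a, b) = s₀ := Sym2.ind (fun a b => ⟨a, b, rfl⟩) s₀
    have hcyc_mem : s(a, b) ∈ (SimpleGraph.Walk.cons hadjG (p.transfer G hpG)).edges := by
      rw [SimpleGraph.Walk.edges_cons, SimpleGraph.Walk.edges_transfer]
      exact List.mem_cons_of_mem _ (hab ▸ hs₀p)
    have hreach_ab : (G \ SimpleGraph.fromEdgeSet {s(a, b)}).Reachable a b :=
      ((SimpleGraph.adj_and_reachable_delete_edges_iff_exists_cycle (G := G)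
        (v := a) (w := b)).mpr ⟨y, _, hcycle, hcyc_mem⟩).2
    rw [hab] at hreach_ab
    -- T' is connected
    have hadj_reach : ∀ u v : ↥S, T.Adj u v → T'.Reachable u v := by
      intro u v huv
      by_cases h0 : s(u, v) = s₀
      · rw [← hab, Sym2.eq_iff] at h0
        rcases h0 with ⟨rfl, rfl⟩ | ⟨rfl, rfl⟩
        · exact hreach_ab
        · exact hreach_ab.symm
      · apply SimpleGraph.Adj.reachable
        rw [hT'def, SimpleGraph.sdiff_adj]
        refine ⟨hTleG huv, ?_⟩
        rw [SimpleGraph.fromEdgeSet_adj]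
        rintro ⟨hc, -⟩
        exact h0 hc
    have hT'conn : T'.Connected := by
      haveI : Nonempty ↥S := hT.isConnected.nonempty
      exact SimpleGraph.Connected.mk
        (fun u v => reachable_trans_of_adj hadj_reach (hT.isConnected.preconnected u v))
    -- edge set of T'
    have hGedge : G.edgeSet = T.edgeSet ∪ {s(x, y)} := by
      rw [hG, SimpleGraph.edgeSet_sup, SimpleGraph.edgeSet_fromEdgeSet]
      congr 1
      ext e'
      simp only [Set.mem_diff, Set.mem_singleton_iff, Set.mem_setOf_eq, and_iff_left_iff_imp]
      rintro rfl
      simpa [Sym2.mk_isDiag_iff] using hxyne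
    have hT'edge : T'.edgeSet = (T.edgeSet ∪ {s(x, y)}) \ {s₀} := by
      rw [hT'def, SimpleGraph.edgeSet_sdiff, SimpleGraph.edgeSet_fromEdgeSet,
        SimpleGraph.edgeSet_sdiff_sdiff_isDiag, hGedge]
    -- T' is acyclic
    have hT'acyclic : T'.IsAcyclic := by
      intro u c hc
      by_cases hxyc : s(x, y) ∈ c.edges
      · have h2 := ((SimpleGraph.adj_and_reachable_delete_edges_iff_exists_cycle (G := T')
          (v := x) (w := y)).mpr ⟨u, c, hc, hxyc⟩).2
        obtain ⟨q⟩ := h2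
        have hq' : ∀ e' ∈ q.edges, e' ∈ T.edgeSet ∧ e' ≠ s₀ := by
          intro e' he'
          have h3 := q.edges_subset_edgeSet he'
          rw [SimpleGraph.edgeSet_deleteEdges, hT'edge] at h3
          obtain ⟨⟨h4, h5⟩, h6⟩ := h3
          rcases h4 with h4 | h4
          · exact ⟨h4, h5⟩
          · exact absurd h4 h6
        let qT := q.transfer T (fun e' he' => (hq' e' he').1)
        have hs₀q : s₀ ∉ (qT.toPath : T.Walk x y).edges := by
          intro hmem
          have h7 := SimpleGraph.Walk.edges_toPath_subset qT hmem
          rw [SimpleGraph.Walk.edges_transfer] at h7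
          exact (hq' s₀ h7).2 rfl
        have heq : (qT.toPath : T.Walk x y) = p := hpu _ (qT.toPath).2
        exact hs₀q (heq ▸ hs₀p)
      · have hcT : ∀ e' ∈ c.edges, e' ∈ T.edgeSet := by
          intro e' he'
          have h3 := c.edges_subset_edgeSet he'
          rw [hT'edge] at h3
          rcases h3.1 with h4 | h4
          · exact h4
          · exact absurd (h4 ▸ he') hxyc
        exact hT.IsAcyclic (c.transfer T hcT) (hc.transfer hcT)
    have hT'tree : T'.IsTree := ⟨hT'conn, hT'acyclic⟩
    -- weight comparison
    have hfinT : T.edgeSet.Finite := Set.toFinite _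
    have hWT : graphWeight S T = ∑ e' ∈ hfinT.toFinset, edgeLen S e' :=
      finsum_mem_eq_finite_toFinset_sum _ hfinT
    have hWT' : graphWeight S T'
        = ∑ e' ∈ insert s(x, y) (hfinT.toFinset.erase s₀), edgeLen S e' := by
      have hEq : T'.edgeSet = ↑(insert s(x, y) (hfinT.toFinset.erase s₀)) := by
        rw [hT'edge]
        ext e'
        simp only [Set.mem_diff, Set.mem_union, Set.mem_singleton_iff, Finset.coe_insert,
          Set.mem_insert_iff, Finset.coe_erase, Set.Finite.coe_toFinset]
        constructor
        · rintro ⟨h3 | h3, h4⟩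
          · exact Or.inr ⟨h3, h4⟩
          · exact Or.inl h3
        · rintro (rfl | ⟨h3, h4⟩)
          · exact ⟨Or.inr rfl, hne⟩
          · exact ⟨Or.inl h3, h4⟩
      rw [graphWeight, hEq, finsum_mem_coe_finset]
    have hxy_not : s(x, y) ∉ hfinT.toFinset.erase s₀ := by
      intro h3
      exact hxyT ((Set.Finite.mem_toFinset hfinT).mp (Finset.mem_of_mem_erase h3))
    have hs₀_mem : s₀ ∈ hfinT.toFinset := (Set.Finite.mem_toFinset hfinT).mpr hs₀T
    have hsum' : ∑ e' ∈ insert s(x, y) (hfinT.toFinset.erase s₀), edgeLen S e'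
        = dist (x : X) (y : X) + (∑ e' ∈ hfinT.toFinset, edgeLen S e' - w (f s₀)) := by
      rw [Finset.sum_insert hxy_not, Finset.sum_erase_eq_sub hs₀_mem, hlenj]
      simp [edgeLen]
    have hlt : graphWeight S T' < graphWeight S T := by
      rw [hWT', hsum', hWT]
      have h8 : dist (x : X) (y : X) < w (f s₀) := lt_of_lt_of_le hd2 hwj
      linarith
    exact absurd (hmin T' hT'tree) (not_le.mpr hlt)
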